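/- Fix ε > 0, H > 0, constants 0 < c_m ≤ c_M, μ₁ > 0 and L ≥ 0. There exists r > 0 depending only on ε, H, c_m, c_M, μ₁, L with the following property: for every Lipschitz diffusion coefficient c on [0,H] with c_m ≤ c ≤ c_M and Lipschitz constant at most L, every μ ≥ μ₁ and λ ≥ (c_M + ε) μ², and every normalized reduced eigenfunction u for (c, μ, λ), one has u(y)² + u'(y)² ≥ r² for all y ∈ [0,H]. -/

import Mathlib

open Set MeasureTheory Filter

/-- `u` (with derivative `u'`) is a reduced eigenfunction for `(c, μ, lam)` on `[0,H]`. -/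
def ReducedEigenfunction (H : ℝ) (c : ℝ → ℝ) (μ lam : ℝ) (u u' : ℝ → ℝ) : Prop :=
  (∀ y ∈ Set.Icc (0:ℝ) H, HasDerivWithinAt u (u' y) (Set.Icc (0:ℝ) H) y) ∧
  ContinuousOn u' (Set.Icc (0:ℝ) H) ∧
  (∀ y ∈ Set.Icc (0:ℝ) H, u' y = u' 0 - ∫ t in (0:ℝ)..y, (lam / c t - μ ^ 2) * u t) ∧
  (∃ y ∈ Set.Icc (0:ℝ) H, u y ≠ 0) ∧
  u 0 = 0 ∧ u H = 0

set_option maxHeartbeats 1000000 in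
lemma amplitude_aux (H c_m K P : ℝ) (hH : 0 < H) (hcm : 0 < c_m)
    (hK0 : 0 ≤ K) (hP1 : 1 ≤ P)
    (c u u' p F D : ℝ → ℝ)
    (hF_def : ∀ t, F t = u t ^ 2 + p t * u' t ^ 2)
    (hp_pos : ∀ y, 0 < p y) (hp_ub : ∀ y, p y ≤ P)
    (hF_deriv : ∀ y ∈ Set.Icc (0:ℝ) H, HasDerivWithinAt F (D y) (Set.Icc (0:ℝ) H) y)
    (hF_cont : ContinuousOn F (Set.Icc (0:ℝ) H))
    (hD_bd : ∀ y, |D y| ≤ K * F y)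
    (hF_nonneg : ∀ t, 0 ≤ F t)
    (hc_lb : ∀ y ∈ Set.Icc (0:ℝ) H, c_m ≤ c y)
    (hc_cont : ContinuousOn c (Set.Icc (0:ℝ) H))
    (hu_cont : ContinuousOn u (Set.Icc (0:ℝ) H))
    (hnorm : (∫ y in (0:ℝ)..H, (u y) ^ 2 / c y) = 1) :
    ∀ y ∈ Set.Icc (0:ℝ) H, c_m / H * Real.exp (-(K * H)) / P ≤ u y ^ 2 + u' y ^ 2 := by
  have hH0 : (0:ℝ) ≤ H := hH.le
  have hP0 : (0:ℝ) < P := lt_of_lt_of_le one_pos hP1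
  have hexp1 : ∀ x : ℝ, HasDerivAt (fun t => Real.exp (K * t)) (Real.exp (K * x) * K) x := by
    intro x
    have h1 : HasDerivAt (fun t : ℝ => K * t) K x := by
      simpa using (hasDerivAt_id x).const_mul K
    exact (Real.hasDerivAt_exp (K * x)).comp x h1
  have hexp2 : ∀ x : ℝ, HasDerivAt (fun t => Real.exp (-(K * t))) (Real.exp (-(K * x)) * (-K)) x := by
    intro x
    have h1 : HasDerivAt (fun t : ℝ => -(K * t)) (-K) x := by
      exact (((hasDerivAt_id x).const_mul K).neg).congr_deriv (by ring)
    exact (Real.hasDerivAt_exp (-(K * x))).comp x h1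
  have hΦ_mono : MonotoneOn (fun t => F t * Real.exp (K * t)) (Set.Icc (0:ℝ) H) := by
    apply monotoneOn_of_hasDerivWithinAt_nonneg (convex_Icc 0 H)
      (f' := fun x => D x * Real.exp (K * x) + F x * (Real.exp (K * x) * K))
    · exact hF_cont.mul (Continuous.continuousOn (by continuity))
    · intro x hx
      exact ((hF_deriv x (interior_subset hx)).mul
        ((hexp1 x).hasDerivWithinAt)).mono interior_subset
    · intro x _
      have h1 := (abs_le.mp (hD_bd x)).1
      have h2 := Real.exp_pos (K * x)
      have h3 := hF_nonneg x
      nlinarith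
  have hΨ_anti : AntitoneOn (fun t => F t * Real.exp (-(K * t))) (Set.Icc (0:ℝ) H) := by
    apply antitoneOn_of_hasDerivWithinAt_nonpos (convex_Icc 0 H)
      (f' := fun x => D x * Real.exp (-(K * x)) + F x * (Real.exp (-(K * x)) * (-K)))
    · exact hF_cont.mul (Continuous.continuousOn (by continuity))
    · intro x hx
      exact ((hF_deriv x (interior_subset hx)).mul
        ((hexp2 x).hasDerivWithinAt)).mono interior_subset
    · intro x _
      have h1 := (abs_le.mp (hD_bd x)).2
      have h2 := Real.exp_pos (-(K * x))
      have h3 := hF_nonneg x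
      nlinarith
  -- max point of u^2/c
  have hc_pos : ∀ y ∈ Set.Icc (0:ℝ) H, 0 < c y := fun y hy => lt_of_lt_of_le hcm (hc_lb y hy)
  have hw_cont : ContinuousOn (fun t => u t ^ 2 / c t) (Set.Icc (0:ℝ) H) :=
    (hu_cont.pow 2).div hc_cont (fun y hy => (hc_pos y hy).ne')
  obtain ⟨y₀, hy₀, hmax⟩ := isCompact_Icc.exists_isMaxOn
    ⟨0, Set.left_mem_Icc.2 hH0⟩ hw_cont
  have hw_nonneg : ∀ y ∈ Set.Icc (0:ℝ) H, 0 ≤ u y ^ 2 / c y := fun y hy =>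
    div_nonneg (sq_nonneg _) (hc_pos y hy).le
  have h1H : 1 ≤ u y₀ ^ 2 / c y₀ * H := by
    have h := intervalIntegral.norm_integral_le_of_norm_le_const
      (a := (0:ℝ)) (b := H) (C := u y₀ ^ 2 / c y₀) (f := fun y => u y ^ 2 / c y) ?_
    · rw [hnorm] at h
      simp only [Real.norm_eq_abs, sub_zero] at h
      rw [abs_one, abs_of_nonneg hH0] at h
      exact h
    · intro x hx
      rw [Set.uIoc_of_le hH0] at hx
      have hx' : x ∈ Set.Icc (0:ℝ) H := ⟨hx.1.le, hx.2⟩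
      rw [Real.norm_eq_abs, abs_of_nonneg (hw_nonneg x hx')]
      exact hmax hx'
  have hw0 : 1 / H ≤ u y₀ ^ 2 / c y₀ := by
    rw [div_le_iff₀ hH]; linarith
  have hFy₀ : c_m / H ≤ F y₀ := by
    have e : u y₀ ^ 2 / c y₀ * c y₀ = u y₀ ^ 2 :=
      div_mul_cancel₀ _ (hc_pos y₀ hy₀).ne'
    have h2 : 1 / H * c_m ≤ u y₀ ^ 2 / c y₀ * c y₀ :=
      mul_le_mul hw0 (hc_lb y₀ hy₀) hcm.le (le_trans (by positivity) hw0)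
    rw [e] at h2
    have h3 : c_m / H = 1 / H * c_m := by ring
    rw [hF_def y₀, h3]
    nlinarith [mul_nonneg (hp_pos y₀).le (sq_nonneg (u' y₀))]
  intro y hy
  have hFy : c_m / H * Real.exp (-(K * H)) ≤ F y := by
    rcases le_total y₀ y with h | h
    · have hm := hΦ_mono hy₀ hy h
      simp only at hm
      rw [← mul_le_mul_iff_of_pos_right (Real.exp_pos (K * y))]
      have hE : Real.exp (-(K * H)) * Real.exp (K * y) ≤ Real.exp (K * y₀) := by
        rw [← Real.exp_add, Real.exp_le_exp]
        have hyH : y - y₀ ≤ H := by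
          have := hy.2; have := hy₀.1; linarith
        nlinarith [mul_le_mul_of_nonneg_left hyH hK0]
      calc c_m / H * Real.exp (-(K * H)) * Real.exp (K * y)
          = c_m / H * (Real.exp (-(K * H)) * Real.exp (K * y)) := by ring
        _ ≤ F y₀ * Real.exp (K * y₀) := by
            apply mul_le_mul hFy₀ hE (by positivity) (hF_nonneg y₀)
        _ ≤ F y * Real.exp (K * y) := hm
    · have hm := hΨ_anti hy hy₀ h
      simp only at hm
      rw [← mul_le_mul_iff_of_pos_right (Real.exp_pos (-(K * y)))]
      have hE : Real.exp (-(K * H)) * Real.exp (-(K * y)) ≤ Real.exp (-(K * y₀)) := by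
        rw [← Real.exp_add, Real.exp_le_exp]
        have hyH : y₀ - y ≤ H := by
          have := hy₀.2; have := hy.1; linarith
        nlinarith [mul_le_mul_of_nonneg_left hyH hK0]
      calc c_m / H * Real.exp (-(K * H)) * Real.exp (-(K * y))
          = c_m / H * (Real.exp (-(K * H)) * Real.exp (-(K * y))) := by ring
        _ ≤ F y₀ * Real.exp (-(K * y₀)) := by
            apply mul_le_mul hFy₀ hE (by positivity) (hF_nonneg y₀)
        _ ≤ F y * Real.exp (-(K * y)) := hm
  have hFP : F y ≤ P * (u y ^ 2 + u' y ^ 2) := by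
    rw [hF_def y]
    nlinarith [sq_nonneg (u y), sq_nonneg (u' y), hp_ub y, (hp_pos y).le, hP1]
  rw [div_le_iff₀ hP0]
  nlinarith

set_option maxHeartbeats 1000000 in
lemma Dbound_aux (c_m A L lam sl : ℝ)
    (hcm : 0 < c_m) (hA : 0 < A) (hL : 0 ≤ L) (hlam0 : 0 < lam)
    (hs_def : sl = Real.sqrt lam)
    (py qy gy dpy a b : ℝ)
    (hpy_lb : c_m / lam ≤ py)
    (hq_ub : qy ≤ lam / c_m) (hq_pos : 0 < qy)
    (hqg : qy * gy = 1)
    (hnear : |py - gy| ≤ L / (c_m ^ 2 * A ^ 2 * lam) * (1 / sl))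
    (hdp : |dpy| ≤ L / (c_m ^ 2 * A ^ 2 * lam)) :
    |2 * a * b * (1 - py * qy) + dpy * b ^ 2|
      ≤ L / (c_m ^ 3 * A ^ 2) * (1 / Real.sqrt c_m + 1) * (a ^ 2 + py * b ^ 2) := by
  have hs0 : 0 < sl := by rw [hs_def]; exact Real.sqrt_pos.2 hlam0
  have hscm : 0 < Real.sqrt c_m := Real.sqrt_pos.2 hcm
  set ℓ : ℝ := L / (c_m ^ 2 * A ^ 2 * lam) with hℓ_def
  have hℓ0 : 0 ≤ ℓ := by positivity
  set δ : ℝ := 1 / sl with hδ_def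
  have hδ0 : 0 < δ := by positivity
  set Fy : ℝ := a ^ 2 + py * b ^ 2 with hF_def
  have hpy : 0 < py := lt_of_lt_of_le (by positivity) hpy_lb
  have hFy : 0 ≤ Fy := by rw [hF_def]; positivity
  have hsq : Real.sqrt py ^ 2 = py := Real.sq_sqrt hpy.le
  have hsqpos : 0 < Real.sqrt py := Real.sqrt_pos.2 hpy
  have h2ab : 2 * |a| * |b| * Real.sqrt py ≤ Fy := by
    have h := sq_nonneg (|a| - Real.sqrt py * |b|)
    have h1 : |a| ^ 2 = a ^ 2 := sq_abs _
    have h2 : |b| ^ 2 = b ^ 2 := sq_abs _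
    rw [hF_def]
    nlinarith
  have hsp : Real.sqrt c_m / sl ≤ Real.sqrt py := by
    have h1 : Real.sqrt (c_m / lam) ≤ Real.sqrt py := Real.sqrt_le_sqrt hpy_lb
    rwa [Real.sqrt_div hcm.le, ← hs_def] at h1
  have h2ab' : 2 * |a| * |b| ≤ Fy * sl / Real.sqrt c_m := by
    rw [le_div_iff₀ hscm]
    have h1 : 2 * |a| * |b| * (Real.sqrt c_m / sl) ≤ 2 * |a| * |b| * Real.sqrt py := by
      apply mul_le_mul_of_nonneg_left hsp; positivity
    have h2 : 2 * |a| * |b| * (Real.sqrt c_m / sl) * sl = 2 * |a| * |b| * Real.sqrt c_m := by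
      field_simp
    calc 2 * |a| * |b| * Real.sqrt c_m
        = 2 * |a| * |b| * (Real.sqrt c_m / sl) * sl := h2.symm
      _ ≤ 2 * |a| * |b| * Real.sqrt py * sl := by
          apply mul_le_mul_of_nonneg_right h1 hs0.le
      _ ≤ Fy * sl := mul_le_mul_of_nonneg_right h2ab hs0.le
  have hpq : |1 - py * qy| ≤ lam / c_m * (ℓ * δ) := by
    have h1 : 1 - py * qy = qy * (gy - py) := by nlinarith [hqg]
    rw [h1, abs_mul, abs_of_pos hq_pos]
    have h2 : |gy - py| ≤ ℓ * δ := by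
      rw [abs_sub_comm]
      simpa [hℓ_def, hδ_def] using hnear
    exact mul_le_mul hq_ub h2 (abs_nonneg _) (by positivity)
  have hterm1 : |2 * a * b * (1 - py * qy)|
      ≤ L / (c_m ^ 3 * A ^ 2) * (1 / Real.sqrt c_m) * Fy := by
    rw [abs_mul]
    have e1 : |2 * a * b| = 2 * |a| * |b| := by
      rw [abs_mul, abs_mul, abs_two]
    rw [e1]
    have step : 2 * |a| * |b| * |1 - py * qy|
        ≤ (Fy * sl / Real.sqrt c_m) * (lam / c_m * (ℓ * δ)) := by
      apply mul_le_mul h2ab' hpq (abs_nonneg _)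
      positivity
    refine le_trans step (le_of_eq ?_)
    rw [hℓ_def, hδ_def]
    field_simp
  have hterm2 : |dpy * b ^ 2| ≤ L / (c_m ^ 3 * A ^ 2) * Fy := by
    have hb2 : b ^ 2 ≤ Fy * lam / c_m := by
      rw [le_div_iff₀ hcm]
      have h2 : py * b ^ 2 ≤ Fy := by rw [hF_def]; nlinarith [sq_nonneg a]
      have h3 : c_m / lam * b ^ 2 ≤ Fy :=
        le_trans (mul_le_mul_of_nonneg_right hpy_lb (sq_nonneg _)) h2
      calc b ^ 2 * c_m = c_m / lam * b ^ 2 * lam := by field_simp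
        _ ≤ Fy * lam := mul_le_mul_of_nonneg_right h3 hlam0.le
    rw [abs_mul, abs_pow, sq_abs]
    calc |dpy| * b ^ 2 ≤ ℓ * (Fy * lam / c_m) := by
          apply mul_le_mul (by simpa [hℓ_def] using hdp) hb2 (sq_nonneg _) hℓ0
      _ = L / (c_m ^ 3 * A ^ 2) * Fy := by
          rw [hℓ_def]; field_simp
  calc |2 * a * b * (1 - py * qy) + dpy * b ^ 2|
      ≤ |2 * a * b * (1 - py * qy)| + |dpy * b ^ 2| := abs_add_le _ _
    _ ≤ L / (c_m ^ 3 * A ^ 2) * (1 / Real.sqrt c_m) * Fy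
        + L / (c_m ^ 3 * A ^ 2) * Fy := add_le_add hterm1 hterm2
    _ = L / (c_m ^ 3 * A ^ 2) * (1 / Real.sqrt c_m + 1) * Fy := by ring

set_option maxHeartbeats 1000000 in
/-- Minimal amplitude property, uniformly over Lipschitz diffusion coefficients. -/
theorem stmt9
    (ε H c_m c_M μ₁ L : ℝ)
    (hε : 0 < ε) (hH : 0 < H) (hcm : 0 < c_m) (hcmM : c_m ≤ c_M)
    (hμ₁ : 0 < μ₁) (hL : 0 ≤ L) :
    ∃ r : ℝ, 0 < r ∧
      ∀ (c u u' : ℝ → ℝ) (μ lam : ℝ),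
        Measurable c → (∀ y ∈ Set.Icc (0:ℝ) H, c_m ≤ c y ∧ c y ≤ c_M) →
        (∀ x ∈ Set.Icc (0:ℝ) H, ∀ y ∈ Set.Icc (0:ℝ) H, |c x - c y| ≤ L * |x - y|) →
        μ₁ ≤ μ → (c_M + ε) * μ ^ 2 ≤ lam →
        ReducedEigenfunction H c μ lam u u' →
        (∫ y in (0:ℝ)..H, (u y) ^ 2 / c y) = 1 →
        ∀ y ∈ Set.Icc (0:ℝ) H, r ^ 2 ≤ (u y) ^ 2 + (u' y) ^ 2 := by
  set A : ℝ := ε / (c_M * (c_M + ε)) with hA_def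
  have hcM : 0 < c_M := lt_of_lt_of_le hcm hcmM
  have hcMε : 0 < c_M + ε := by linarith
  have hA : 0 < A := div_pos hε (mul_pos hcM hcMε)
  set K : ℝ := L / (c_m ^ 3 * A ^ 2) * (1 / Real.sqrt c_m + 1) with hK_def
  have hscm : 0 < Real.sqrt c_m := Real.sqrt_pos.2 hcm
  have hK0 : 0 ≤ K := by
    apply mul_nonneg (div_nonneg hL (by positivity)); positivity
  set P : ℝ := max 1 (1 / (A * ((c_M + ε) * μ₁ ^ 2))) with hP_def
  have hP1 : (1:ℝ) ≤ P := le_max_left _ _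
  have hP0 : (0:ℝ) < P := lt_of_lt_of_le one_pos hP1
  set r : ℝ := Real.sqrt (c_m / H * Real.exp (-(K * H)) / P) with hr_def
  have hrsq : r ^ 2 = c_m / H * Real.exp (-(K * H)) / P := Real.sq_sqrt (by positivity)
  have hr : 0 < r := Real.sqrt_pos.2 (by positivity)
  clear_value A K P r
  refine ⟨r, hr, ?_⟩
  intro c u u' μ lam _hmeas hbd hlip hμ hlam hred hnorm
  obtain ⟨hu, hu'cont, heq, -, -, -⟩ := hred
  have hcM : 0 < c_M := lt_of_lt_of_le hcm hcmM
  have hcMε : 0 < c_M + ε := by linarith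
  have hμ0 : 0 < μ := lt_of_lt_of_le hμ₁ hμ
  have hlam0 : 0 < lam := lt_of_lt_of_le (by positivity) hlam
  have hH0 : (0:ℝ) ≤ H := le_of_lt hH
  -- clamp
  set π : ℝ → ℝ := fun t => max 0 (min t H) with hπ_def
  have hπ_mem : ∀ t, π t ∈ Set.Icc (0:ℝ) H := fun t =>
    ⟨le_max_left _ _, max_le hH0 (min_le_right _ _)⟩
  have hπ_id : ∀ t ∈ Set.Icc (0:ℝ) H, π t = t := fun t ht => by
    simp only [hπ_def]
    rw [min_eq_left ht.2, max_eq_right ht.1]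
  have hπ_lip : ∀ s t, |π s - π t| ≤ |s - t| := fun s t => by
    refine le_trans (abs_max_sub_max_le_max _ _ _ _) (max_le (by simp) ?_)
    refine le_trans (abs_min_sub_min_le_max _ _ _ _) (max_le le_rfl (by simp))
  have hπ_cont : Continuous π := continuous_const.max (continuous_id.min continuous_const)
  set cc : ℝ → ℝ := fun t => c (π t) with hcc_def
  have hcc_lb : ∀ t, c_m ≤ cc t := fun t => (hbd _ (hπ_mem t)).1
  have hcc_ub : ∀ t, cc t ≤ c_M := fun t => (hbd _ (hπ_mem t)).2
  have hcc_pos : ∀ t, 0 < cc t := fun t => lt_of_lt_of_le hcm (hcc_lb t)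
  have hcc_lip : ∀ s t, |cc s - cc t| ≤ L * |s - t| := fun s t =>
    le_trans (hlip _ (hπ_mem s) _ (hπ_mem t)) (mul_le_mul_of_nonneg_left (hπ_lip s t) hL)
  have hc_cont : ContinuousOn c (Set.Icc (0:ℝ) H) := by
    have : LipschitzOnWith (Real.toNNReal L) c (Set.Icc (0:ℝ) H) := by
      rw [lipschitzOnWith_iff_dist_le_mul]
      intro x hx y hy
      rw [Real.dist_eq, Real.dist_eq, Real.coe_toNNReal L hL]
      exact hlip x hx y hy
    exact this.continuousOn
  have hcc_cont : Continuous cc := hc_cont.comp_continuous hπ_cont hπ_mem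
  -- q and g
  set q : ℝ → ℝ := fun t => lam / cc t - μ ^ 2 with hq_def
  have hμ2 : μ ^ 2 ≤ lam / (c_M + ε) := by
    rw [le_div_iff₀ hcMε]; linarith [hlam]
  have hq_lb : ∀ t, A * lam ≤ q t := by
    intro t
    have h1 : lam / c_M ≤ lam / cc t :=
      div_le_div_of_nonneg_left (le_of_lt hlam0) (hcc_pos t) (hcc_ub t)
    have h2 : A * lam = lam / c_M - lam / (c_M + ε) := by
      rw [hA_def]; field_simp; ring
    simp only [hq_def]; rw [h2]; linarith
  have hq_pos : ∀ t, 0 < q t := fun t => lt_of_lt_of_le (by positivity) (hq_lb t)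
  have hq_ub : ∀ t, q t ≤ lam / c_m := by
    intro t
    have h1 : lam / cc t ≤ lam / c_m :=
      div_le_div_of_nonneg_left (le_of_lt hlam0) hcm (hcc_lb t)
    have : (0:ℝ) ≤ μ ^ 2 := sq_nonneg μ
    simp only [hq_def]; linarith
  have hq_lip : ∀ s t, |q s - q t| ≤ lam * L / c_m ^ 2 * |s - t| := by
    intro s t
    have h1 : q s - q t = lam * (cc t - cc s) / (cc s * cc t) := by
      simp only [hq_def]
      rw [eq_div_iff (mul_pos (hcc_pos s) (hcc_pos t)).ne']
      field_simp [(hcc_pos s).ne', (hcc_pos t).ne']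
      ring
    rw [h1, abs_div, abs_mul]
    have h2 : |cc s * cc t| = cc s * cc t := abs_of_pos (mul_pos (hcc_pos s) (hcc_pos t))
    rw [h2, abs_of_pos hlam0, div_le_iff₀ (mul_pos (hcc_pos s) (hcc_pos t))]
    have h3 : |cc t - cc s| ≤ L * |s - t| := by
      rw [abs_sub_comm]; exact hcc_lip s t
    have h4 : c_m ^ 2 ≤ cc s * cc t := by
      have := hcc_lb s; have := hcc_lb t; nlinarith
    have h5 : lam * L / c_m ^ 2 * |s - t| * (cc s * cc t) ≥ lam * L / c_m ^ 2 * |s - t| * c_m ^ 2 := by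
      apply mul_le_mul_of_nonneg_left h4
      positivity
    have h6 : lam * L / c_m ^ 2 * |s - t| * c_m ^ 2 = lam * (L * |s - t|) := by
      field_simp
    nlinarith [abs_nonneg (s - t), mul_le_mul_of_nonneg_left h3 (le_of_lt hlam0)]
  set g : ℝ → ℝ := fun t => 1 / q t with hg_def
  have hg_lb : ∀ t, c_m / lam ≤ g t := by
    intro t
    rw [hg_def]
    rw [div_le_div_iff₀ hlam0 (hq_pos t)]
    have := hq_ub t
    calc c_m * q t ≤ c_m * (lam / c_m) := mul_le_mul_of_nonneg_left this (le_of_lt hcm)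
    _ = 1 * lam := by field_simp
  have hg_ub : ∀ t, g t ≤ 1 / (A * lam) := by
    intro t
    apply div_le_div_of_nonneg_left one_pos.le (by positivity) (hq_lb t)
  have hg_lip : ∀ s t, |g s - g t| ≤ L / (c_m ^ 2 * A ^ 2 * lam) * |s - t| := by
    intro s t
    have h1 : g s - g t = (q t - q s) / (q s * q t) := by
      simp only [hg_def]; field_simp [(hq_pos s).ne', (hq_pos t).ne']
    rw [h1, abs_div]
    have h2 : |q s * q t| = q s * q t := abs_of_pos (mul_pos (hq_pos s) (hq_pos t))
    rw [h2, div_le_iff₀ (mul_pos (hq_pos s) (hq_pos t))]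
    have h3 : |q t - q s| ≤ lam * L / c_m ^ 2 * |s - t| := by
      rw [abs_sub_comm]; exact hq_lip s t
    have h4 : (A * lam) ^ 2 ≤ q s * q t := by
      have := hq_lb s; have := hq_lb t
      have h0 : 0 ≤ A * lam := by positivity
      nlinarith
    have h5 : L / (c_m ^ 2 * A ^ 2 * lam) * |s - t| * (A * lam) ^ 2 = lam * L / c_m ^ 2 * |s - t| := by
      field_simp
    calc |q t - q s| ≤ lam * L / c_m ^ 2 * |s - t| := h3
      _ = L / (c_m ^ 2 * A ^ 2 * lam) * |s - t| * (A * lam) ^ 2 := h5.symm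
      _ ≤ L / (c_m ^ 2 * A ^ 2 * lam) * |s - t| * (q s * q t) := by
          apply mul_le_mul_of_nonneg_left h4; positivity
  have hg_cont : Continuous g := by
    apply Continuous.div continuous_const
    · exact (continuous_const.div hcc_cont fun t => (hcc_pos t).ne').sub continuous_const
    · exact fun t => (hq_pos t).ne'
  -- mollified inverse coefficient p
  set sl : ℝ := Real.sqrt lam with hs_def
  have hs0 : 0 < sl := Real.sqrt_pos.2 hlam0
  have hs2 : sl ^ 2 = lam := Real.sq_sqrt (le_of_lt hlam0)
  set δ : ℝ := 1 / sl with hδ_def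
  have hδ0 : 0 < δ := by positivity
  set ℓ : ℝ := L / (c_m ^ 2 * A ^ 2 * lam) with hℓ_def
  have hℓ0 : 0 ≤ ℓ := by positivity
  set G : ℝ → ℝ := fun x => ∫ t in (0:ℝ)..x, g t with hG_def
  have hG : ∀ x, HasDerivAt G (g x) x := fun x =>
    (hg_cont.integral_hasStrictDerivAt 0 x).hasDerivAt
  set p : ℝ → ℝ := fun y => (G (y + δ) - G (y - δ)) / (2 * δ) with hp_def
  set dp : ℝ → ℝ := fun y => (g (y + δ) - g (y - δ)) / (2 * δ) with hdp_def
  have hp_deriv : ∀ y, HasDerivAt p (dp y) y := by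
    intro y
    have h1 : HasDerivAt (fun y => G (y + δ)) (g (y + δ)) y := by
      have := (hG (y + δ)).comp y ((hasDerivAt_id y).add_const δ)
      exact this.congr_deriv (mul_one _)
    have h2 : HasDerivAt (fun y => G (y - δ)) (g (y - δ)) y := by
      have := (hG (y - δ)).comp y ((hasDerivAt_id y).sub_const δ)
      exact this.congr_deriv (mul_one _)
    simpa [hp_def, hdp_def] using (h1.sub h2).div_const (2 * δ)
  have hp_cont : Continuous p := by
    rw [continuous_iff_continuousAt]; exact fun y => (hp_deriv y).continuousAt
  have hp_int : ∀ y, p y = (∫ t in (y - δ)..(y + δ), g t) / (2 * δ) := by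
    intro y
    have h := intervalIntegral.integral_add_adjacent_intervals
      (a := (0:ℝ)) (b := y - δ) (c := y + δ) (μ := volume) (f := g)
      (hg_cont.intervalIntegrable _ _) (hg_cont.intervalIntegrable _ _)
    simp only [hp_def, hG_def]
    rw [← h]; ring
  have hp_lb : ∀ y, c_m / lam ≤ p y := by
    intro y
    rw [hp_int y]
    rw [le_div_iff₀ (by positivity : (0:ℝ) < 2 * δ)]
    have h1 : ∫ t in (y - δ)..(y + δ), (c_m / lam) ≤ ∫ t in (y - δ)..(y + δ), g t := by
      apply intervalIntegral.integral_mono_on (by linarith)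
        (intervalIntegrable_const) (hg_cont.intervalIntegrable _ _)
      intro x _; exact hg_lb x
    rw [intervalIntegral.integral_const] at h1
    have h2 : (y + δ - (y - δ)) = 2 * δ := by ring
    rw [h2] at h1
    calc c_m / lam * (2 * δ) = 2 * δ * (c_m / lam) := by ring
    _ ≤ _ := by simpa using h1
  have hp_ub : ∀ y, p y ≤ 1 / (A * lam) := by
    intro y
    rw [hp_int y]
    rw [div_le_iff₀ (by positivity : (0:ℝ) < 2 * δ)]
    have h1 : ∫ t in (y - δ)..(y + δ), g t ≤ ∫ t in (y - δ)..(y + δ), (1 / (A * lam)) := by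
      apply intervalIntegral.integral_mono_on (by linarith)
        (hg_cont.intervalIntegrable _ _) (intervalIntegrable_const)
      intro x _; exact hg_ub x
    rw [intervalIntegral.integral_const] at h1
    have h2 : (y + δ - (y - δ)) = 2 * δ := by ring
    rw [h2] at h1
    calc (∫ t in (y - δ)..(y + δ), g t) ≤ 2 * δ * (1 / (A * lam)) := by simpa using h1
    _ = 1 / (A * lam) * (2 * δ) := by ring
  have hp_pos : ∀ y, 0 < p y := fun y => lt_of_lt_of_le (by positivity) (hp_lb y)
  have hp_near : ∀ y, |p y - g y| ≤ ℓ * δ := by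
    intro y
    have h0 : p y - g y = (∫ t in (y - δ)..(y + δ), (g t - g y)) / (2 * δ) := by
      rw [hp_int y, intervalIntegral.integral_sub (hg_cont.intervalIntegrable _ _)
        intervalIntegrable_const, intervalIntegral.integral_const]
      have h2 : (y + δ - (y - δ)) = 2 * δ := by ring
      rw [h2]
      field_simp
      rw [smul_eq_mul]
    rw [h0, abs_div, abs_of_pos (by positivity : (0:ℝ) < 2 * δ),
      div_le_iff₀ (by positivity : (0:ℝ) < 2 * δ)]
    have h1 : |∫ t in (y - δ)..(y + δ), (g t - g y)| ≤ ℓ * δ * |y + δ - (y - δ)| := by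
      rw [← Real.norm_eq_abs]
      apply intervalIntegral.norm_integral_le_of_norm_le_const
      intro x hx
      rw [Set.uIoc_of_le (by linarith : y - δ ≤ y + δ)] at hx
      have hxy : |x - y| ≤ δ := by
        rw [abs_le]; constructor <;> [linarith [hx.1]; linarith [hx.2]]
      calc ‖g x - g y‖ = |g x - g y| := rfl
      _ ≤ ℓ * |x - y| := hg_lip x y
      _ ≤ ℓ * δ := mul_le_mul_of_nonneg_left hxy hℓ0
    have h2 : |y + δ - (y - δ)| = 2 * δ := by
      rw [show y + δ - (y - δ) = 2 * δ by ring]; exact abs_of_pos (by positivity)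
    rw [h2] at h1
    linarith
  have hdp_bd : ∀ y, |dp y| ≤ ℓ := by
    intro y
    simp only [hdp_def]
    rw [abs_div, abs_of_pos (by positivity : (0:ℝ) < 2 * δ),
      div_le_iff₀ (by positivity : (0:ℝ) < 2 * δ)]
    calc |g (y + δ) - g (y - δ)| ≤ ℓ * |y + δ - (y - δ)| := hg_lip _ _
    _ = ℓ * (2 * δ) := by rw [show y + δ - (y - δ) = 2 * δ by ring,
        abs_of_pos (by positivity : (0:ℝ) < 2 * δ)]
  -- second derivative of u
  have hu_cont : ContinuousOn u (Set.Icc (0:ℝ) H) :=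
    fun y hy => (hu y hy).continuousWithinAt
  set uu : ℝ → ℝ := fun t => u (π t) with huu_def
  have huu_cont : Continuous uu := hu_cont.comp_continuous hπ_cont hπ_mem
  set ft : ℝ → ℝ := fun t => q t * uu t with hft_def
  have hq_cont : Continuous q :=
    (continuous_const.div hcc_cont fun t => (hcc_pos t).ne').sub continuous_const
  have hft_cont : Continuous ft := hq_cont.mul huu_cont
  set V : ℝ → ℝ := fun x => ∫ t in (0:ℝ)..x, ft t with hV_def
  have hV : ∀ x, HasDerivAt V (ft x) x := fun x =>
    (hft_cont.integral_hasStrictDerivAt 0 x).hasDerivAt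
  have hu'eq : ∀ t ∈ Set.Icc (0:ℝ) H, u' t = u' 0 - V t := by
    intro t ht
    rw [heq t ht, hV_def]
    congr 1
    apply intervalIntegral.integral_congr
    intro x hx
    have hx' : x ∈ Set.Icc (0:ℝ) H := by
      rw [Set.uIcc_of_le ht.1] at hx
      exact ⟨hx.1, le_trans hx.2 ht.2⟩
    simp only [hft_def, hq_def, huu_def, hcc_def, hπ_id x hx']
  have hu'' : ∀ y ∈ Set.Icc (0:ℝ) H,
      HasDerivWithinAt u' (-(q y * u y)) (Set.Icc (0:ℝ) H) y := by
    intro y hy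
    have h1 : HasDerivWithinAt (fun t => u' 0 - V t) (-(ft y)) (Set.Icc (0:ℝ) H) y :=
      ((hV y).const_sub (u' 0)).hasDerivWithinAt
    have h2 := h1.congr hu'eq (hu'eq y hy)
    have h3 : ft y = q y * u y := by
      simp only [hft_def, huu_def, hπ_id y hy]
    rwa [h3] at h2
  -- the Lyapunov function
  set F : ℝ → ℝ := fun t => (u t) ^ 2 + p t * (u' t) ^ 2 with hF_def
  set D : ℝ → ℝ := fun t => 2 * u t * u' t * (1 - p t * q t) + dp t * (u' t) ^ 2 with hD_def
  have hF_nonneg : ∀ t, 0 ≤ F t := by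
    intro t
    simp only [hF_def]
    have := (hp_pos t).le
    positivity
  have hF_deriv : ∀ y ∈ Set.Icc (0:ℝ) H, HasDerivWithinAt F (D y) (Set.Icc (0:ℝ) H) y := by
    intro y hy
    have h1 : HasDerivWithinAt (fun t => (u t) ^ 2)
        ((2 : ℕ) * u y ^ 1 * u' y) (Set.Icc (0:ℝ) H) y := (hu y hy).pow 2
    have h2 : HasDerivWithinAt (fun t => (u' t) ^ 2)
        ((2 : ℕ) * u' y ^ 1 * (-(q y * u y))) (Set.Icc (0:ℝ) H) y := (hu'' y hy).pow 2
    have h3 := ((hp_deriv y).hasDerivWithinAt.mul h2)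
    have h4 := h1.add h3
    refine (h4 : HasDerivWithinAt F _ (Set.Icc (0:ℝ) H) y).congr_deriv ?_
    show _ = 2 * u y * u' y * (1 - p y * q y) + dp y * (u' y) ^ 2
    push_cast
    ring
  have hF_cont : ContinuousOn F (Set.Icc (0:ℝ) H) :=
    (hu_cont.pow 2).add (hp_cont.continuousOn.mul (hu'cont.pow 2))
  -- key differential inequality
  have hD_bd : ∀ y, |D y| ≤ K * F y := by
    intro y
    have hqg : q y * g y = 1 := by
      simp only [hg_def, mul_one_div]
      exact div_self (hq_pos y).ne'
    have hnear := hp_near y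
    rw [hℓ_def, hδ_def] at hnear
    have hdp := hdp_bd y
    rw [hℓ_def] at hdp
    have key := Dbound_aux c_m A L lam sl hcm hA hL hlam0 hs_def
      (p y) (q y) (g y) (dp y) (u y) (u' y) (hp_lb y) (hq_ub y) (hq_pos y) hqg hnear hdp
    rw [hK_def]
    simp only [hD_def, hF_def]
    exact key
  -- apply the general lemma
  have hp_ubP : ∀ y, p y ≤ P := by
    intro y
    have h1 : A * ((c_M + ε) * μ₁ ^ 2) ≤ A * lam := by
      apply mul_le_mul_of_nonneg_left _ hA.le
      have h2 : (c_M + ε) * μ₁ ^ 2 ≤ (c_M + ε) * μ ^ 2 := by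
        apply mul_le_mul_of_nonneg_left _ hcMε.le
        exact pow_le_pow_left₀ hμ₁.le hμ 2
      linarith
    have h3 : 1 / (A * lam) ≤ 1 / (A * ((c_M + ε) * μ₁ ^ 2)) :=
      one_div_le_one_div_of_le (by positivity) h1
    refine le_trans (hp_ub y) (le_trans h3 ?_)
    rw [hP_def]
    exact le_max_right _ _
  have key := amplitude_aux H c_m K P hH hcm hK0 hP1 c u u' p F D
    (fun t => rfl) hp_pos hp_ubP hF_deriv hF_cont hD_bd hF_nonneg
    (fun y hy => (hbd y hy).1) hc_cont hu_cont hnorm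
  intro y hy
  rw [hrsq]
  exact key y hy
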